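/- The map F(a,b) → Z sending a word w with closed lattice path in Z² (i.e., trivial abelianization) to its signed enclosed area is a group homomorphism from the kernel of the abelianization map F(a,b) → Z² to Z, and it sends the commutator [a,b] = aba⁻¹b⁻¹ to 1. -/

import Mathlib

def step : Fin 2 × Bool → ℤ × ℤ
  | (i, b) =>
      let s : ℤ := if b then 1 else -1
      if i = 0 then (s, 0) else (0, s)

/-- Endpoint of the lattice path traced by a word (its abelianized image in `ℤ²`). -/
def endpoint (l : List (Fin 2 × Bool)) : ℤ × ℤ := (l.map step).sum

/-- Shoelace-formula signed area of the lattice path of a word, starting at `p`. -/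
def areaFrom : ℤ × ℤ → List (Fin 2 × Bool) → ℚ
  | _, [] => 0
  | p, s :: rest =>
      let q := p + step s
      ((p.1 * q.2 - q.1 * p.2 : ℤ) : ℚ) / 2 + areaFrom q rest

def pathArea (l : List (Fin 2 × Bool)) : ℚ := areaFrom (0, 0) l

open scoped commutatorElement

lemma step_neg (x : Fin 2) (b : Bool) : step (x, !b) = -step (x, b) := by
  fin_cases x <;> cases b <;> simp [step]

lemma endpoint_cons (s : Fin 2 × Bool) (l : List (Fin 2 × Bool)) :
    endpoint (s :: l) = step s + endpoint l := by simp [endpoint]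

lemma endpoint_append (l1 l2 : List (Fin 2 × Bool)) :
    endpoint (l1 ++ l2) = endpoint l1 + endpoint l2 := by simp [endpoint]

lemma areaFrom_cons (p : ℤ × ℤ) (s : Fin 2 × Bool) (l : List (Fin 2 × Bool)) :
    areaFrom p (s :: l) = (((p.1 * (p + step s).2 - (p + step s).1 * p.2 : ℤ) : ℚ)) / 2
      + areaFrom (p + step s) l := rfl

lemma areaFrom_append (l1 l2 : List (Fin 2 × Bool)) : ∀ p : ℤ × ℤ,
    areaFrom p (l1 ++ l2) = areaFrom p l1 + areaFrom (p + endpoint l1) l2 := by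
  induction l1 with
  | nil => intro p; simp [areaFrom, endpoint]
  | cons s t ih =>
    intro p
    rw [List.cons_append, areaFrom_cons, areaFrom_cons, ih, endpoint_cons, add_assoc]
    ring

lemma areaFrom_cancel (p : ℤ × ℤ) (x : Fin 2) (b : Bool) (l : List (Fin 2 × Bool)) :
    areaFrom p ((x, b) :: (x, !b) :: l) = areaFrom p l := by
  rw [areaFrom_cons, areaFrom_cons, step_neg]
  have h : p + step (x, b) + -step (x, b) = p := by abel
  rw [h]
  push_cast
  ring

lemma endpoint_cancel (x : Fin 2) (b : Bool) (l : List (Fin 2 × Bool)) :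
    endpoint ((x, b) :: (x, !b) :: l) = endpoint l := by
  rw [endpoint_cons, endpoint_cons, step_neg]; abel

lemma areaFrom_red {l1 l2 : List (Fin 2 × Bool)} (h : FreeGroup.Red l1 l2) (p : ℤ × ℤ) :
    areaFrom p l1 = areaFrom p l2 := by
  induction h with
  | refl => rfl
  | tail _ hstep ih =>
    cases hstep with
    | @not L1 L2 x b =>
        rw [ih, areaFrom_append, areaFrom_append, areaFrom_cancel]

lemma areaFrom_int (l : List (Fin 2 × Bool)) : ∀ p : ℤ × ℤ, ∃ k : ℤ,
    areaFrom p l = (k : ℚ) +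
      (((p + endpoint l).1 * (p + endpoint l).2 - p.1 * p.2 : ℤ) : ℚ) / 2 := by
  induction l with
  | nil => intro p; exact ⟨0, by simp [areaFrom, endpoint]⟩
  | cons s t ih =>
    intro p
    obtain ⟨x, b⟩ := s
    obtain ⟨k, hk⟩ := ih (p + step (x, b))
    rw [areaFrom_cons, hk, endpoint_cons, ← add_assoc]
    fin_cases x <;> cases b
    · exact ⟨k + p.2, by simp only [step, Prod.fst_add, Prod.snd_add, if_true,
        reduceIte, Fin.isValue]; push_cast; ring⟩
    · exact ⟨k - p.2, by simp only [step, Prod.fst_add, Prod.snd_add, if_true,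
        reduceIte, Fin.isValue]; push_cast; ring⟩
    · exact ⟨k, by simp only [step, Prod.fst_add, Prod.snd_add, if_true,
        reduceIte, Fin.isValue]; push_cast; ring⟩
    · exact ⟨k, by simp only [step, Prod.fst_add, Prod.snd_add, if_true,
        reduceIte, Fin.isValue]; push_cast; ring⟩


/-- On the kernel of the abelianization `F(a,b) → ℤ²` (words with closed lattice paths),
the signed enclosed area is an integer-valued group homomorphism to `ℤ`, sending the
commutator `[a,b] = aba⁻¹b⁻¹` to `1`. -/
theorem area_hom_on_kernel :
    (∀ w : FreeGroup (Fin 2), endpoint w.toWord = (0, 0) →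
        ∃ n : ℤ, pathArea w.toWord = (n : ℚ)) ∧
    (∀ w v : FreeGroup (Fin 2), endpoint w.toWord = (0, 0) →
        endpoint v.toWord = (0, 0) →
        pathArea (w * v).toWord = pathArea w.toWord + pathArea v.toWord) ∧
    pathArea (⁅FreeGroup.of (0 : Fin 2), FreeGroup.of (1 : Fin 2)⁆ :
        FreeGroup (Fin 2)).toWord = 1 := by
  refine ⟨?_, ?_, ?_⟩
  · intro w hw
    obtain ⟨k, hk⟩ := areaFrom_int w.toWord (0, 0)
    refine ⟨k, ?_⟩
    rw [pathArea, hk, hw]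
    norm_num
  · intro w v hw hv
    have hmul : (w * v) = FreeGroup.mk (w.toWord ++ v.toWord) := by
      rw [← FreeGroup.mul_mk, FreeGroup.mk_toWord, FreeGroup.mk_toWord]
    have hred : FreeGroup.Red (w.toWord ++ v.toWord) ((w * v).toWord) := by
      rw [hmul, FreeGroup.toWord_mk]
      exact FreeGroup.reduce.red
    rw [pathArea, ← areaFrom_red hred, areaFrom_append, hw]
    simp [pathArea]
  · have h : (⁅FreeGroup.of (0 : Fin 2), FreeGroup.of (1 : Fin 2)⁆ :
        FreeGroup (Fin 2)).toWord =
        [((0 : Fin 2), true), (1, true), (0, false), (1, false)] := by decide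
    rw [h]
    norm_num [pathArea, areaFrom, step, Prod.fst_add, Prod.snd_add]
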